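/- Identity for the conditionally negative quadratic form of |x|: for real numbers x₀,…,xₙ and coefficients v₀,…,vₙ with Σⱼ vⱼ = 0, one has Σⱼ Σₖ vⱼ vₖ |xⱼ − xₖ| = −2 ∫_ℝ (Σⱼ vⱼ 1_{(−∞, xⱼ]}(u))² du, where 1_A denotes the indicator function of the set A. -/

import Mathlib

open MeasureTheory Set

noncomputable def Dfun (a b : ℝ) : ℝ → ℝ :=
  fun u => Set.indicator (Set.Iic a) (fun _ => (1:ℝ)) u
    - Set.indicator (Set.Iic b) (fun _ => (1:ℝ)) u

lemma Dfun_sq (a b u : ℝ) :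
    (Dfun a b u) ^ 2 = Set.indicator (Set.Ioc (min a b) (max a b)) (fun _ => (1:ℝ)) u := by
  unfold Dfun
  by_cases h1 : u ≤ a <;> by_cases h2 : u ≤ b <;>
    rcases le_total a b with hab | hab <;>
    simp_all [Set.indicator_apply, Set.mem_Ioc, min_def, max_def] <;>
    linarith

lemma Dfun_sq_integrable (a b : ℝ) : Integrable (fun u => (Dfun a b u) ^ 2) := by
  have : (fun u => (Dfun a b u) ^ 2)
      = Set.indicator (Set.Ioc (min a b) (max a b)) (fun _ => (1:ℝ)) := by
    funext u; exact Dfun_sq a b u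
  rw [this]
  exact (integrableOn_const measure_Ioc_lt_top.ne).integrable_indicator
    measurableSet_Ioc

lemma Dfun_sq_integral (a b : ℝ) : ∫ u, (Dfun a b u) ^ 2 = |a - b| := by
  have : (fun u => (Dfun a b u) ^ 2)
      = Set.indicator (Set.Ioc (min a b) (max a b)) (fun _ => (1:ℝ)) := by
    funext u; exact Dfun_sq a b u
  rw [this, integral_indicator_const (1:ℝ) measurableSet_Ioc, measureReal_def, Real.volume_Ioc,
    ENNReal.toReal_ofReal (by simp [min_le_max] : (0:ℝ) ≤ max a b - min a b)]
  rw [max_sub_min_eq_abs, abs_sub_comm, smul_eq_mul, mul_one]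

theorem abs_quadratic_form_identity (n : ℕ) (xs : Fin (n+1) → ℝ)
    (v : Fin (n+1) → ℝ) (hv : ∑ j, v j = 0) :
    ∑ j, ∑ k, v j * v k * |xs j - xs k|
      = -2 * ∫ u : ℝ, (∑ j, v j * Set.indicator (Set.Iic (xs j)) (fun _ => (1:ℝ)) u) ^ 2 := by
  classical
  set c := xs 0 with hc
  have hintegrand : ∀ u, (∑ j, v j * Set.indicator (Set.Iic (xs j)) (fun _ => (1:ℝ)) u) ^ 2
      = ∑ j, ∑ k, v j * v k *
          (((Dfun (xs j) c u) ^ 2 + (Dfun (xs k) c u) ^ 2 - (Dfun (xs j) (xs k) u) ^ 2) / 2) := by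
    intro u
    have h1 : ∑ j, v j * Set.indicator (Set.Iic (xs j)) (fun _ => (1:ℝ)) u
        = ∑ j, v j * Dfun (xs j) c u := by
      unfold Dfun
      rw [← sub_eq_zero]
      rw [← Finset.sum_sub_distrib]
      have : ∀ j, v j * Set.indicator (Set.Iic (xs j)) (fun _ => (1:ℝ)) u
          - v j * (Set.indicator (Set.Iic (xs j)) (fun _ => (1:ℝ)) u
              - Set.indicator (Set.Iic c) (fun _ => (1:ℝ)) u)
          = v j * Set.indicator (Set.Iic c) (fun _ => (1:ℝ)) u := by intro j; ring
      simp only [this]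
      rw [← Finset.sum_mul, hv, zero_mul]
    rw [h1, sq, Finset.sum_mul_sum]
    refine Finset.sum_congr rfl fun j _ => Finset.sum_congr rfl fun k _ => ?_
    have hD : Dfun (xs j) (xs k) u = Dfun (xs j) c u - Dfun (xs k) c u := by
      unfold Dfun; ring
    rw [hD]; ring
  have hterm_int : ∀ (j k : Fin (n+1)), Integrable (fun u =>
      v j * v k * (((Dfun (xs j) c u) ^ 2 + (Dfun (xs k) c u) ^ 2
        - (Dfun (xs j) (xs k) u) ^ 2) / 2)) := by
    intro j k
    exact ((((Dfun_sq_integrable (xs j) c).add (Dfun_sq_integrable (xs k) c)).sub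
      (Dfun_sq_integrable (xs j) (xs k))).div_const 2).const_mul _
  have hIntEq : ∫ u : ℝ, (∑ j, v j * Set.indicator (Set.Iic (xs j)) (fun _ => (1:ℝ)) u) ^ 2
      = ∑ j, ∑ k, v j * v k * ((|xs j - c| + |xs k - c| - |xs j - xs k|) / 2) := by
    have : (fun u : ℝ => (∑ j, v j * Set.indicator (Set.Iic (xs j)) (fun _ => (1:ℝ)) u) ^ 2)
        = fun u => ∑ j, ∑ k, v j * v k *
            (((Dfun (xs j) c u) ^ 2 + (Dfun (xs k) c u) ^ 2
              - (Dfun (xs j) (xs k) u) ^ 2) / 2) := by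
      funext u; exact hintegrand u
    rw [this]
    rw [integral_finset_sum _ (fun j _ => integrable_finset_sum _ (fun k _ => hterm_int j k))]
    refine Finset.sum_congr rfl fun j _ => ?_
    rw [integral_finset_sum _ (fun k _ => hterm_int j k)]
    refine Finset.sum_congr rfl fun k _ => ?_
    have hA : Integrable (fun a : ℝ => Dfun (xs j) c a ^ 2 + Dfun (xs k) c a ^ 2) :=
      (Dfun_sq_integrable _ _).add (Dfun_sq_integrable _ _)
    rw [integral_const_mul, integral_div,
      integral_sub hA (Dfun_sq_integrable _ _),
      integral_add (Dfun_sq_integrable _ _) (Dfun_sq_integrable _ _),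
      Dfun_sq_integral, Dfun_sq_integral, Dfun_sq_integral]
  rw [hIntEq]
  have e1 : ∑ j, ∑ k, v j * v k * |xs j - c| = 0 := by
    have h : ∀ j : Fin (n+1), ∑ k, v j * v k * |xs j - c| = (v j * |xs j - c|) * ∑ k, v k := by
      intro j; rw [Finset.mul_sum]; exact Finset.sum_congr rfl fun k _ => by ring
    simp [h, hv]
  have e2 : ∑ j, ∑ k, v j * v k * |xs k - c| = 0 := by
    rw [Finset.sum_comm]
    have h : ∀ k : Fin (n+1), ∑ j, v j * v k * |xs k - c| = (v k * |xs k - c|) * ∑ j, v j := by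
      intro k; rw [Finset.mul_sum]; exact Finset.sum_congr rfl fun j _ => by ring
    simp [h, hv]
  have key : ∀ j k : Fin (n+1),
      (-2:ℝ) * (v j * v k * ((|xs j - c| + |xs k - c| - |xs j - xs k|)/2))
        = v j * v k * |xs j - xs k| - v j * v k * |xs j - c| - v j * v k * |xs k - c| :=
    fun j k => by ring
  simp only [Finset.mul_sum, key, Finset.sum_sub_distrib]
  rw [e1, e2]; ring
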